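/- Let f : ℝ → ℝ and let x be a nonzero vector in three-dimensional Euclidean space. If f is differentiable at ‖x‖, then the radial vector field X(y) := f(‖y‖)·y/‖y‖ is differentiable at x and its divergence at x (the trace of its Fréchet derivative) equals f′(‖x‖) + 2·f(‖x‖)/‖x‖. -/

import Mathlib

open scoped RealInnerProductSpace

local notation "E" => EuclideanSpace ℝ (Fin 3)

lemma trace_smulRight_aux (φ : E →ₗ[ℝ] ℝ) (m : E) :
    LinearMap.trace ℝ E (φ.smulRight m) = φ m := by
  have h : φ.smulRight m = dualTensorHom ℝ E E (φ ⊗ₜ m) := by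
    ext y; simp
  rw [h, LinearMap.trace_eq_contract_apply]
  simp

lemma hasFDerivAt_norm_aux (x : E) (hx : x ≠ 0) :
    HasFDerivAt (fun y : E => ‖y‖) (‖x‖⁻¹ • innerSL ℝ x) x := by
  have hr : (0:ℝ) < ‖x‖ := norm_pos_iff.mpr hx
  have h1 : HasFDerivAt (fun y : E => ‖y‖ ^ 2) (2 • innerSL ℝ x) x :=
    (hasStrictFDerivAt_norm_sq x).hasFDerivAt
  have hsq : HasDerivAt Real.sqrt (1 / (2 * Real.sqrt (‖x‖ ^ 2))) (‖x‖ ^ 2) :=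
    Real.hasDerivAt_sqrt (by positivity)
  have h2 := hsq.comp_hasFDerivAt x h1
  have hfun : (fun y : E => Real.sqrt (‖y‖ ^ 2)) = fun y : E => ‖y‖ := by
    ext y; exact Real.sqrt_sq (norm_nonneg y)
  simp only [Function.comp_def] at h2
  rw [hfun] at h2
  refine h2.congr_fderiv ?_
  symm
  rw [Real.sqrt_sq hr.le]
  ext y
  simp only [ContinuousLinearMap.coe_smul', Pi.smul_apply, ContinuousLinearMap.smul_apply]
  rw [smul_comm]
  simp only [smul_eq_mul]
  ring

/-- For `f : ℝ → ℝ` differentiable at `‖x‖` and `x ≠ 0` in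
three-dimensional Euclidean space, the radial vector field `X(y) = f(‖y‖)·y/‖y‖` is
differentiable at `x` and its divergence (the trace of its Fréchet derivative) at `x`
equals `f′(‖x‖) + 2·f(‖x‖)/‖x‖`. -/
theorem divergence_radial_field (f : ℝ → ℝ) (x : EuclideanSpace ℝ (Fin 3))
    (hx : x ≠ 0) (hf : DifferentiableAt ℝ f ‖x‖) :
    DifferentiableAt ℝ (fun y : EuclideanSpace ℝ (Fin 3) => (f ‖y‖ / ‖y‖) • y) x ∧
    LinearMap.trace ℝ (EuclideanSpace ℝ (Fin 3))
        (fderiv ℝ (fun y : EuclideanSpace ℝ (Fin 3) => (f ‖y‖ / ‖y‖) • y) x).toLinearMap =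
      deriv f ‖x‖ + 2 * f ‖x‖ / ‖x‖ := by
  set r := ‖x‖ with hrdef
  have hr : r ≠ 0 := norm_ne_zero_iff.mpr hx
  have hrpos : (0:ℝ) < r := norm_pos_iff.mpr hx
  set d : ℝ := (deriv f r * r - f r * 1) / r ^ 2 with hd
  have hh : HasDerivAt (fun s : ℝ => f s / s) d r :=
    hf.hasDerivAt.div (hasDerivAt_id r) hr
  have hnorm := hasFDerivAt_norm_aux x hx
  have hc : HasFDerivAt (fun y : E => f ‖y‖ / ‖y‖) (d • (r⁻¹ • innerSL ℝ x)) x :=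
    by have := hh.comp_hasFDerivAt x hnorm; exact this
  have hX : HasFDerivAt (fun y : E => (f ‖y‖ / ‖y‖) • y)
      ((f r / r) • ContinuousLinearMap.id ℝ E +
        (d • (r⁻¹ • innerSL ℝ x)).smulRight x) x :=
    hc.smul (hasFDerivAt_id x)
  refine ⟨hX.differentiableAt, ?_⟩
  rw [hX.fderiv]
  have hcoe : ((f r / r) • ContinuousLinearMap.id ℝ E +
        (d • (r⁻¹ • innerSL ℝ x)).smulRight x).toLinearMap =
      (f r / r) • (LinearMap.id : E →ₗ[ℝ] E) +
        ((d • (r⁻¹ • innerSL ℝ x)) : E →L[ℝ] ℝ).toLinearMap.smulRight x := by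
    ext y; simp
  rw [hcoe, map_add, map_smul, LinearMap.trace_id, trace_smulRight_aux]
  have hdim : Module.finrank ℝ E = 3 := finrank_euclideanSpace_fin
  have happ : ((d • (r⁻¹ • innerSL ℝ x)) : E →L[ℝ] ℝ).toLinearMap x = d * r := by
    simp only [ContinuousLinearMap.coe_smul, LinearMap.smul_apply,
      ContinuousLinearMap.coe_coe, ContinuousLinearMap.smul_apply, innerSL_apply_apply,
      real_inner_self_eq_norm_sq, smul_eq_mul]
    rw [← hrdef]
    field_simp
  rw [happ, hdim, hd]
  field_simp
  ring_nf
  field_simp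
  ring
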